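/- Let d ≥ 2 and let κ_i : ℝ → ℝ, i = 1, …, d−1, be continuous. Let K(s) be the d×d skew-symmetric matrix with K(s)_{i,i+1} = κ_i(s), K(s)_{i+1,i} = −κ_i(s) and all other entries zero, and suppose e_1, …, e_d : ℝ → ℝ^d are differentiable and satisfy the Frenet–Serret equations ė_i(s) = Σ_{j=1}^d K(s)_{ij} e_j(s). Let K̂(s) denote the lower-right (d−1)×(d−1) block of K(s) (rows and columns 2, …, d) and let R : ℝ → Matrix (Fin (d−1)) (Fin (d−1)) ℝ be differentiable with Ṙ(s) + R(s) K̂(s) = 0. Define the Tang frame vectors ẽ_μ(s) = Σ_{ν=1}^{d−1} R(s)_{μν} e_{ν+1}(s) for μ = 1, …, d−1. Then for every μ and every s, the derivative of ẽ_μ satisfies ẽ̇_μ(s) = −κ_1(s) R(s)_{μ1} e_1(s); in particular ẽ̇_μ(s) is parallel to the tangent vector e_1(s). -/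

import Mathlib

/-- (with `d = n + 1`, `n ≥ 1`, so that `d ≥ 2`) Given a Frenet frame
`e 0, …, e n` in `ℝ^{n+1}` satisfying `ė_i = Σ_j K_{ij} e_j` with the skew-symmetric
Frenet matrix `K` built from the curvatures `κ_i`, and `R` solving `Ṙ + R K̂ = 0`
where `K̂` is the lower-right `n × n` block of `K`, the Tang frame vectors
`ẽ_μ = Σ_ν R_{μν} e_{ν+1}` satisfy `ẽ̇_μ(s) = −κ₁(s) R_{μ1}(s) e₁(s)`; in particular
their derivatives are parallel to the tangent vector `e₁ = e 0`. -/
theorem tang_frame_derivative_tangential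
    (n : ℕ) (hn : 1 ≤ n)
    (κ : Fin n → ℝ → ℝ) (hκ : ∀ i, Continuous (κ i))
    (K : ℝ → Matrix (Fin (n + 1)) (Fin (n + 1)) ℝ)
    (hK1 : ∀ (s : ℝ) (i : Fin n), K s i.castSucc i.succ = κ i s)
    (hK2 : ∀ (s : ℝ) (i : Fin n), K s i.succ i.castSucc = -κ i s)
    (hK0 : ∀ (s : ℝ) (i j : Fin (n + 1)),
      (i : ℕ) + 1 ≠ (j : ℕ) → (j : ℕ) + 1 ≠ (i : ℕ) → K s i j = 0)
    (e : Fin (n + 1) → ℝ → EuclideanSpace ℝ (Fin (n + 1)))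
    (he : ∀ (i : Fin (n + 1)) (s : ℝ),
      HasDerivAt (e i) (∑ j : Fin (n + 1), K s i j • e j s) s)
    (R : ℝ → Matrix (Fin n) (Fin n) ℝ)
    (hR : ∀ (s : ℝ) (μ ν : Fin n),
      HasDerivAt (fun t => R t μ ν) (-∑ ρ : Fin n, R s μ ρ * K s ρ.succ ν.succ) s) :
    ∀ (μ : Fin n) (s : ℝ),
      HasDerivAt (fun t => ∑ ν : Fin n, R t μ ν • e ν.succ t)
        ((-(κ ⟨0, hn⟩ s * R s μ ⟨0, hn⟩)) • e 0 s) s := by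
  intro μ s
  have hder : HasDerivAt (fun t => ∑ ν : Fin n, R t μ ν • e ν.succ t)
      (∑ ν : Fin n, ((-∑ ρ : Fin n, R s μ ρ * K s ρ.succ ν.succ) • e ν.succ s
        + R s μ ν • ∑ j : Fin (n + 1), K s ν.succ j • e j s)) s := by
    apply HasDerivAt.fun_sum
    intro ν _
    have := (hR s μ ν).smul (he ν.succ s)
    exact this.congr_deriv (add_comm _ _)
  convert hder using 1
  have split : ∀ ν : Fin n, (∑ j : Fin (n + 1), K s ν.succ j • e j s)
      = K s ν.succ 0 • e 0 s + ∑ ρ : Fin n, K s ν.succ ρ.succ • e ρ.succ s :=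
    fun ν => Fin.sum_univ_succ _
  have h3 : ∑ ν : Fin n, R s μ ν • ∑ ρ : Fin n, K s ν.succ ρ.succ • e ρ.succ s
      = ∑ ν : Fin n, (∑ ρ : Fin n, R s μ ρ * K s ρ.succ ν.succ) • e ν.succ s := by
    simp only [Finset.smul_sum, smul_smul]
    rw [Finset.sum_comm]
    simp [Finset.sum_smul]
  have h2 : ∑ ν : Fin n, R s μ ν • (K s ν.succ 0 • e 0 s)
      = (-(κ ⟨0, hn⟩ s * R s μ ⟨0, hn⟩)) • e 0 s := by
    rw [Finset.sum_eq_single (⟨0, hn⟩ : Fin n)]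
    · have hc : ((⟨0, hn⟩ : Fin n).castSucc) = (0 : Fin (n + 1)) := rfl
      rw [show K s (⟨0, hn⟩ : Fin n).succ 0 = -κ ⟨0, hn⟩ s from hc ▸ hK2 s ⟨0, hn⟩]
      rw [smul_smul]; ring_nf
    · intro ν _ hν
      have hv : (ν : ℕ) ≠ 0 := fun h => hν (Fin.ext h)
      have h0 : K s ν.succ 0 = 0 := by
        apply hK0 <;> simp [Fin.val_succ] <;> omega
      simp [h0]
    · simp
  calc (-(κ ⟨0, hn⟩ s * R s μ ⟨0, hn⟩)) • e 0 s
      = (∑ ν : Fin n, (-(∑ ρ : Fin n, R s μ ρ * K s ρ.succ ν.succ)) • e ν.succ s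
          + ∑ ν : Fin n, (∑ ρ : Fin n, R s μ ρ * K s ρ.succ ν.succ) • e ν.succ s)
        + (-(κ ⟨0, hn⟩ s * R s μ ⟨0, hn⟩)) • e 0 s := by
        simp [← Finset.sum_add_distrib, ← add_smul]
    _ = ∑ ν : Fin n, ((-∑ ρ : Fin n, R s μ ρ * K s ρ.succ ν.succ) • e ν.succ s
          + R s μ ν • ∑ j : Fin (n + 1), K s ν.succ j • e j s) := by
        simp only [split, smul_add, Finset.sum_add_distrib, h3, h2]
        abel
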